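/- Let 𝒳 be a countable type and M a natural number. A function f : (Fin M → 𝒳) → ℝ is invariant under all permutations of its M arguments (i.e., f(x ∘ σ) = f(x) for every permutation σ of Fin M) if and only if there exist functions ψ : 𝒳 → ℝ and Φ : ℝ → ℝ such that f(x) = Φ(∑_{i ∈ Fin M} ψ(x i)) for all x. -/

import Mathlib

-- Lemma A: list perm of tuples gives an index permutation
lemma tuple_perm_of_list_perm {α : Type*} [LinearOrder α] {M : ℕ} {u v : Fin M → α}
    (h : (List.ofFn u).Perm (List.ofFn v)) : ∃ σ : Equiv.Perm (Fin M), u ∘ σ = v := by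
  have hu := (Tuple.monotone_sort u).sortedLE_ofFn
  have hv := (Tuple.monotone_sort v).sortedLE_ofFn
  have hperm : (List.ofFn (u ∘ Tuple.sort u)).Perm (List.ofFn (v ∘ Tuple.sort v)) :=
    ((Equiv.Perm.ofFn_comp_perm _ u).trans h).trans (Equiv.Perm.ofFn_comp_perm _ v).symm
  have heq : u ∘ Tuple.sort u = v ∘ Tuple.sort v :=
    List.ofFn_injective (hperm.eq_of_sortedLE hu hv)
  refine ⟨(Tuple.sort v).symm.trans (Tuple.sort u), ?_⟩
  funext i
  have := congrFun heq ((Tuple.sort v).symm i)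
  simpa using this


lemma digit_unique (M : ℕ) (hM : 1 ≤ M) : ∀ N : ℕ, ∀ s t : Multiset ℕ,
    s.card ≤ M → t.card ≤ M →
    (s.map (fun n => (M+1)^n)).sum = N → (t.map (fun n => (M+1)^n)).sum = N → s = t := by
  intro N
  induction N using Nat.strong_induction_on with
  | _ N IH =>
  intro s t hs ht hsum h'sum
  set g : ℕ → ℕ := fun n => (M+1)^n with hg
  -- decomposition of the sum for any multiset
  have decomp : ∀ u : Multiset ℕ, (u.map g).sum =
      u.count 0 + (M+1) * (((u.filter (· ≠ 0)).map (· - 1)).map g).sum := by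
    intro u
    have h1 : u = u.filter (fun n => n = 0) + u.filter (· ≠ 0) := by
      simpa using (Multiset.filter_add_not (fun n => n = 0) u).symm
    have h2 : u.filter (fun n => n = 0) = Multiset.replicate (u.count 0) 0 :=
      Multiset.filter_eq' u 0
    conv_lhs => rw [h1]
    rw [Multiset.map_add, Multiset.sum_add, h2]
    have h3 : ((Multiset.replicate (u.count 0) 0).map g).sum = u.count 0 := by
      simp [hg]
    rw [h3]
    congr 1
    have h4 : (u.filter (· ≠ 0)).map g = (u.filter (· ≠ 0)).map (fun n => (M+1) * g (n - 1)) := by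
      apply Multiset.map_congr rfl
      intro n hn
      have hn0 : n ≠ 0 := by simpa using (Multiset.mem_filter.mp hn).2
      simp only [hg]
      rw [← pow_succ']
      congr 1
      omega
    rw [h4, Multiset.map_map]
    simpa [Function.comp] using
      (Multiset.sum_map_mul_left (a := (M+1)) (f := fun n => g (n-1)) (s := u.filter (· ≠ 0)))
  have hcnt : ∀ u : Multiset ℕ, u.card ≤ M → (u.map g).sum % (M+1) = u.count 0 := by
    intro u hu
    rw [decomp u]
    have hlt : u.count 0 < M + 1 := lt_of_le_of_lt (le_trans (Multiset.count_le_card 0 u) hu) (by omega)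
    rw [Nat.add_mul_mod_self_left, Nat.mod_eq_of_lt hlt]
  have hk : s.count 0 = t.count 0 := by
    rw [← hcnt s hs, ← hcnt t ht, hsum, h'sum]
  set s' := s.filter (· ≠ 0) with hs'
  set t' := t.filter (· ≠ 0) with ht'
  set A := ((s'.map (· - 1)).map g).sum with hA
  set B := ((t'.map (· - 1)).map g).sum with hB
  have hds : N = s.count 0 + (M+1) * A := by rw [← hsum, decomp]
  have hdt : N = t.count 0 + (M+1) * B := by rw [← h'sum, decomp]
  have hAB : A = B := by
    have : (M+1) * A = (M+1) * B := by omega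
    exact Nat.eq_of_mul_eq_mul_left (by omega) this
  -- show s' = t'
  have hs'eq : s' = t' := by
    rcases Nat.eq_zero_or_pos A with hA0 | hApos
    · -- both sums zero → both filtered multisets empty
      have e1 : s'.map (· - 1) = 0 := by
        by_contra h
        obtain ⟨n, hn⟩ := Multiset.exists_mem_of_ne_zero h
        have : g n ≤ A := Multiset.le_sum_of_mem (Multiset.mem_map_of_mem g hn)
        have : 0 < g n := Nat.pow_pos (n := n) (by omega)
        omega
      have e2 : t'.map (· - 1) = 0 := by
        by_contra h
        obtain ⟨n, hn⟩ := Multiset.exists_mem_of_ne_zero h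
        have : g n ≤ B := Multiset.le_sum_of_mem (Multiset.mem_map_of_mem g hn)
        have : 0 < g n := Nat.pow_pos (n := n) (by omega)
        omega
      have es : s' = 0 := by
        have := congrArg Multiset.card e1
        simpa using Multiset.card_eq_zero.mp (by simpa using this)
      have et : t' = 0 := by
        have := congrArg Multiset.card e2
        simpa using Multiset.card_eq_zero.mp (by simpa using this)
      rw [es, et]
    · have hAN : A < N := by
        have : 2 * A ≤ (M+1) * A := Nat.mul_le_mul_right A (by omega)
        omega
      have cs : (s'.map (· - 1)).card ≤ M := by
        rw [Multiset.card_map]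
        exact le_trans (Multiset.card_le_card (Multiset.filter_le _ _)) hs
      have ct : (t'.map (· - 1)).card ≤ M := by
        rw [Multiset.card_map]
        exact le_trans (Multiset.card_le_card (Multiset.filter_le _ _)) ht
      have heq := IH A hAN _ _ cs ct rfl hAB.symm
      -- recover s' = t' from map (·-1) equality, since all elements positive
      have rs : (s'.map (· - 1)).map (· + 1) = s' := by
        rw [Multiset.map_map]
        rw [Multiset.map_congr rfl (fun n hn => ?_), Multiset.map_id']
        have : n ≠ 0 := by simpa using (Multiset.mem_filter.mp hn).2
        simp [Function.comp]; omega
      have rt : (t'.map (· - 1)).map (· + 1) = t' := by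
        rw [Multiset.map_map]
        rw [Multiset.map_congr rfl (fun n hn => ?_), Multiset.map_id']
        have : n ≠ 0 := by simpa using (Multiset.mem_filter.mp hn).2
        simp [Function.comp]; omega
      rw [← rs, ← rt, heq]
  -- reassemble
  have hrs : s = Multiset.replicate (s.count 0) 0 + s' := by
    conv_lhs => rw [← Multiset.filter_add_not (fun n => n = 0) s]
    rw [Multiset.filter_eq' s 0]
  have hrt : t = Multiset.replicate (t.count 0) 0 + t' := by
    conv_lhs => rw [← Multiset.filter_add_not (fun n => n = 0) t]
    rw [Multiset.filter_eq' t 0]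
  rw [hrs, hrt, hk, hs'eq]

/-- **Representation result for permutation invariance (Deep Sets, Theorem 1).**
Let `𝒳` be a countable type and `M` a natural number. A function
`f : (Fin M → 𝒳) → ℝ` is invariant under all permutations of its `M` arguments
if and only if there exist `ψ : 𝒳 → ℝ` and `Φ : ℝ → ℝ` such that
`f x = Φ (∑ i, ψ (x i))` for all `x`. -/
theorem permutation_invariant_iff_sum_decomposition
    (𝒳 : Type*) [Countable 𝒳] (M : ℕ) (f : (Fin M → 𝒳) → ℝ) :
    (∀ (x : Fin M → 𝒳) (σ : Equiv.Perm (Fin M)), f (x ∘ σ) = f x) ↔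
      ∃ (ψ : 𝒳 → ℝ) (Φ : ℝ → ℝ), ∀ x : Fin M → 𝒳, f x = Φ (∑ i, ψ (x i)) := by
  constructor
  · intro hinv
    rcases Nat.eq_zero_or_pos M with hM | hM
    · -- M = 0 : everything trivial, f is constant on the unique tuple
      subst hM
      refine ⟨fun _ => 0, fun _ => f (fun i => i.elim0), fun x => ?_⟩
      congr 1
      funext i
      exact i.elim0
    · obtain ⟨enc, henc⟩ := Countable.exists_injective_nat 𝒳
      set ψ : 𝒳 → ℝ := fun a => ((M+1 : ℕ)^(enc a) : ℕ) with hψ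
      -- key: equal sums imply f equal
      have key : ∀ x y : Fin M → 𝒳, (∑ i, ψ (x i)) = (∑ i, ψ (y i)) → f x = f y := by
        intro x y hsum
        -- reduce to nat sums
        have hnat : (∑ i, (M+1)^(enc (x i))) = (∑ i, (M+1)^(enc (y i))) := by
          have := hsum
          rw [hψ] at this
          push_cast at this
          exact_mod_cast this
        -- convert to multiset sums
        have hms : ∀ z : Fin M → 𝒳,
            ((((List.ofFn (enc ∘ z)) : Multiset ℕ)).map (fun n => (M+1)^n)).sum
              = ∑ i, (M+1)^(enc (z i)) := by
          intro z
          rw [Multiset.map_coe, Multiset.sum_coe, ← List.map_ofFn, List.map_map,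
            List.map_ofFn, List.sum_ofFn]
          rfl
        have hcard : ∀ z : Fin M → 𝒳,
            Multiset.card ((List.ofFn (enc ∘ z)) : Multiset ℕ) ≤ M := by
          intro z
          simp
        have hmeq : ((List.ofFn (enc ∘ x)) : Multiset ℕ) = ((List.ofFn (enc ∘ y)) : Multiset ℕ) :=
          digit_unique M hM _ _ _ (hcard x) (hcard y) ((hms x).trans hnat) (hms y)
        have hperm : (List.ofFn (enc ∘ x)).Perm (List.ofFn (enc ∘ y)) :=
          Quotient.exact hmeq
        obtain ⟨σ, hσ⟩ := tuple_perm_of_list_perm hperm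
        have hxy : x ∘ σ = y := by
          funext i
          exact henc (congrFun hσ i)
        rw [← hxy]
        exact (hinv x σ).symm
    -- define Φ by choice
      classical
      refine ⟨ψ, fun r => if h : ∃ x : Fin M → 𝒳, (∑ i, ψ (x i)) = r then f h.choose else 0, ?_⟩
      intro x
      have hx : ∃ y : Fin M → 𝒳, (∑ i, ψ (y i)) = (∑ i, ψ (x i)) := ⟨x, rfl⟩
      simp only []
      rw [dif_pos hx]
      exact (key hx.choose x hx.choose_spec).symm
  · rintro ⟨ψ, Φ, h⟩ x σ
    rw [h x, h (x ∘ σ)]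
    congr 1
    exact Equiv.sum_comp σ (fun i => ψ (x i))
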